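/- For every $\gamma \in (0,1)$ there is a constant $C_\gamma > 0$ such that for all $t > 0$ and all $x, a, b \in \mathbb{R}^d$, $|p_t(a,x) - p_t(b,x)| \le C_\gamma \, t^{-\gamma/2} |a-b|^\gamma \big( p_{2t}(a,x) + p_{2t}(b,x) \big)$. -/

import Mathlib

open MeasureTheory Real Set

/-- The `d`-dimensional Gaussian heat kernel. -/
noncomputable def heatKernel (d : ℕ) (t : ℝ) (x y : EuclideanSpace ℝ (Fin d)) : ℝ :=
  (2 * π * t) ^ (-(d : ℝ) / 2) * Real.exp (-‖y - x‖ ^ 2 / (2 * t))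

lemma key_ineq (γ : ℝ) (hγ0 : 0 < γ) (hγ1 : γ ≤ 1) (u v c : ℝ) (hu : 0 ≤ u)
    (huv : u ≤ v) (hc : 0 ≤ c) (hvc : v ≤ u + c) :
    Real.exp (-u^2/2) - Real.exp (-v^2/2) ≤ Real.exp 1 * c ^ γ * Real.exp (-u^2/4) := by
  rcases le_or_gt 1 c with hc1 | hc1
  · have h1 : (1:ℝ) ≤ c ^ γ := Real.one_le_rpow hc1 hγ0.le
    have h2 : Real.exp (-u^2/2) ≤ Real.exp (-u^2/4) := by
      apply Real.exp_le_exp.2; nlinarith [sq_nonneg u]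
    have h3 : (1:ℝ) ≤ Real.exp 1 := by
      linarith [Real.add_one_le_exp (1:ℝ)]
    calc Real.exp (-u^2/2) - Real.exp (-v^2/2) ≤ Real.exp (-u^2/4) := by
          linarith [(Real.exp_pos (-v^2/2)).le]
      _ = 1 * 1 * Real.exp (-u^2/4) := by ring
      _ ≤ Real.exp 1 * c ^ γ * Real.exp (-u^2/4) :=
          mul_le_mul_of_nonneg_right
            (mul_le_mul h3 h1 zero_le_one (by linarith)) (Real.exp_pos _).le
  · set z : ℝ := (v^2 - u^2)/2 with hzdef
    have hz : 0 ≤ z := by simp only [hzdef]; nlinarith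
    have e1 : Real.exp (-v^2/2) = Real.exp (-u^2/2) * Real.exp (-z) := by
      rw [← Real.exp_add, hzdef]; ring_nf
    have h1 : 1 - Real.exp (-z) ≤ z := by
      linarith [Real.add_one_le_exp (-z)]
    have h1' : 1 - Real.exp (-z) ≤ z ^ γ := by
      rcases eq_or_lt_of_le hz with hz0 | hz0
      · rw [← hz0]
        simp [Real.zero_rpow hγ0.ne', Real.exp_zero]
      rcases le_or_gt z 1 with hz1 | hz1
      · calc 1 - Real.exp (-z) ≤ z := h1
          _ = z ^ (1:ℝ) := (Real.rpow_one z).symm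
          _ ≤ z ^ γ := Real.rpow_le_rpow_of_exponent_ge hz0 hz1 hγ1
      · have : (1:ℝ) ≤ z ^ γ := Real.one_le_rpow hz1.le hγ0.le
        linarith [(Real.exp_pos (-z)).le]
    have hzb : z ≤ c * (u + 1) := by
      have hmul : (v - u) * (v + u) ≤ c * (2*u + 1) :=
        mul_le_mul (by linarith) (by linarith) (by linarith) hc
      simp only [hzdef]; nlinarith
    have h3 : z ^ γ ≤ c ^ γ * (u + 1) := by
      calc z ^ γ ≤ (c * (u+1)) ^ γ := Real.rpow_le_rpow hz hzb hγ0.le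
        _ = c ^ γ * (u+1) ^ γ := Real.mul_rpow hc (by linarith)
        _ ≤ c ^ γ * (u+1) := by
            have : (u+1) ^ γ ≤ (u+1) ^ (1:ℝ) :=
              Real.rpow_le_rpow_of_exponent_le (by linarith) hγ1
            rw [Real.rpow_one] at this
            exact mul_le_mul_of_nonneg_left this (Real.rpow_nonneg hc γ)
    have h4 : (u + 1) * Real.exp (-u^2/2) ≤ Real.exp 1 * Real.exp (-u^2/4) := by
      have ha : u + 1 ≤ Real.exp u := Real.add_one_le_exp u
      calc (u + 1) * Real.exp (-u^2/2) ≤ Real.exp u * Real.exp (-u^2/2) :=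
            mul_le_mul_of_nonneg_right ha (Real.exp_pos _).le
        _ = Real.exp (u - u^2/2) := by rw [← Real.exp_add]; ring_nf
        _ ≤ Real.exp (1 - u^2/4) := by
            apply Real.exp_le_exp.2; nlinarith [sq_nonneg (u - 2)]
        _ = Real.exp 1 * Real.exp (-u^2/4) := by rw [← Real.exp_add]; ring_nf
    have hE : (0:ℝ) < Real.exp (-u^2/2) := Real.exp_pos _
    calc Real.exp (-u^2/2) - Real.exp (-v^2/2)
        = Real.exp (-u^2/2) * (1 - Real.exp (-z)) := by rw [e1]; ring
      _ ≤ Real.exp (-u^2/2) * (c ^ γ * (u + 1)) := by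
          apply mul_le_mul_of_nonneg_left _ hE.le
          exact h1'.trans h3
      _ = c ^ γ * ((u + 1) * Real.exp (-u^2/2)) := by ring
      _ ≤ c ^ γ * (Real.exp 1 * Real.exp (-u^2/4)) :=
          mul_le_mul_of_nonneg_left h4 (Real.rpow_nonneg hc γ)
      _ = Real.exp 1 * c ^ γ * Real.exp (-u^2/4) := by ring

lemma aux_ineq (d : ℕ) (γ : ℝ) (hγ0 : 0 < γ) (hγ1 : γ ≤ 1) (t : ℝ) (ht : 0 < t)
    (x a b : EuclideanSpace ℝ (Fin d)) :
    heatKernel d t a x - heatKernel d t b x ≤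
      (2 ^ ((d:ℝ)/2) * Real.exp 1) * t ^ (-γ/2) * ‖a - b‖ ^ γ * heatKernel d (2*t) a x := by
  have hπ : (0:ℝ) < π := Real.pi_pos
  set r : ℝ := ‖x - a‖ with hrdef
  set s : ℝ := ‖x - b‖ with hsdef
  set δ : ℝ := ‖a - b‖ with hδdef
  have hr : 0 ≤ r := norm_nonneg _
  have hs : 0 ≤ s := norm_nonneg _
  have hδ : 0 ≤ δ := norm_nonneg _
  have htri : s ≤ r + δ := by
    have : x - b = (x - a) + (a - b) := by abel
    rw [hsdef, this]
    exact norm_add_le _ _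
  have hst : (0:ℝ) < Real.sqrt t := Real.sqrt_pos.2 ht
  have hst2 : Real.sqrt t ^ 2 = t := Real.sq_sqrt ht.le
  set P : ℝ := (2 * π * t) ^ (-(d:ℝ)/2) with hPdef
  have hP : 0 < P := Real.rpow_pos_of_pos (by positivity) _
  have hKa : heatKernel d (2*t) a x =
      2 ^ (-(d:ℝ)/2) * P * Real.exp (-(r/Real.sqrt t)^2/4) := by
    rw [heatKernel, show 2 * π * (2*t) = 2 * (2 * π * t) by ring,
      Real.mul_rpow (by norm_num) (by positivity), ← hrdef]
    have : -r ^ 2 / (2 * (2*t)) = -(r/Real.sqrt t)^2/4 := by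
      field_simp
      rw [hst2]; ring
    rw [this, hPdef]
  have hcγ : (δ / Real.sqrt t) ^ γ = δ ^ γ * t ^ (-γ/2) := by
    rw [Real.div_rpow hδ hst.le, Real.sqrt_eq_rpow, ← Real.rpow_mul ht.le,
      div_eq_mul_inv, ← Real.rpow_neg ht.le]
    congr 1
    ring
  have hta : heatKernel d t a x = P * Real.exp (-(r/Real.sqrt t)^2/2) := by
    rw [heatKernel, ← hrdef, hPdef]
    congr 1
    field_simp
    rw [hst2]
  have htb : heatKernel d t b x = P * Real.exp (-(s/Real.sqrt t)^2/2) := by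
    rw [heatKernel, ← hsdef, hPdef]
    congr 1
    field_simp
    rw [hst2]
  have hh2 : (2:ℝ) ^ ((d:ℝ)/2) * 2 ^ (-(d:ℝ)/2) = 1 := by
    rw [← Real.rpow_add (by norm_num : (0:ℝ) < 2),
      show (d:ℝ)/2 + -(d:ℝ)/2 = 0 by ring, Real.rpow_zero]
  rcases le_or_gt r s with hrs | hrs
  · have hkey := key_ineq γ hγ0 hγ1 (r/Real.sqrt t) (s/Real.sqrt t) (δ/Real.sqrt t)
      (by positivity) (by gcongr) (by positivity)
      (by rw [← add_div]; gcongr)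
    calc heatKernel d t a x - heatKernel d t b x
        = P * (Real.exp (-(r/Real.sqrt t)^2/2) - Real.exp (-(s/Real.sqrt t)^2/2)) := by
          rw [hta, htb]; ring
      _ ≤ P * (Real.exp 1 * (δ/Real.sqrt t) ^ γ * Real.exp (-(r/Real.sqrt t)^2/4)) :=
          mul_le_mul_of_nonneg_left hkey hP.le
      _ = (2 ^ ((d:ℝ)/2) * Real.exp 1) * t ^ (-γ/2) * δ ^ γ * heatKernel d (2*t) a x := by
          rw [hKa, hcγ]
          linear_combination (-(Real.exp 1 * δ ^ γ * t ^ (-γ/2) * P *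
            Real.exp (-(r/Real.sqrt t)^2/4))) * hh2
  · have hle : heatKernel d t a x ≤ heatKernel d t b x := by
      rw [hta, htb]
      apply mul_le_mul_of_nonneg_left _ hP.le
      apply Real.exp_le_exp.2
      have h1 : (s/Real.sqrt t)^2 ≤ (r/Real.sqrt t)^2 := by
        gcongr <;> first | positivity | linarith
      linarith
    have hRpos : 0 ≤ (2 ^ ((d:ℝ)/2) * Real.exp 1) * t ^ (-γ/2) * δ ^ γ *
        heatKernel d (2*t) a x := by
      rw [hKa]
      positivity
    linarith

theorem stmt6 (d : ℕ) (hd : 1 ≤ d) (γ : ℝ) (hγ0 : 0 < γ) (hγ1 : γ < 1) :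
    ∃ C > 0, ∀ t : ℝ, 0 < t → ∀ x a b : EuclideanSpace ℝ (Fin d),
      |heatKernel d t a x - heatKernel d t b x| ≤
        C * t ^ (-γ / 2) * ‖a - b‖ ^ γ *
          (heatKernel d (2 * t) a x + heatKernel d (2 * t) b x) := by
  refine ⟨2 ^ ((d:ℝ)/2) * Real.exp 1, by positivity, fun t ht x a b => ?_⟩
  have hKa : 0 ≤ heatKernel d (2*t) a x := by
    rw [heatKernel]; positivity
  have hKb : 0 ≤ heatKernel d (2*t) b x := by
    rw [heatKernel]; positivity
  have hcoef : 0 ≤ (2 ^ ((d:ℝ)/2) * Real.exp 1) * t ^ (-γ/2) * ‖a - b‖ ^ γ := by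
    positivity
  rw [abs_sub_le_iff]
  constructor
  · have h := aux_ineq d γ hγ0 hγ1.le t ht x a b
    nlinarith
  · have h := aux_ineq d γ hγ0 hγ1.le t ht x b a
    rw [norm_sub_rev b a] at h
    nlinarith
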